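/- Let C, D ⊆ ℤⁿ be pure submonoids and V ⊆ ℝⁿ a vector subspace. Let W = span(C ∩ D ∩ V). Then cl((C ∩ D) ∩ V) = cl(C ∩ W) ∩ cl(D ∩ W), where cl(M) := ℤⁿ ∩ topological-closure(conv(M)). -/

import Mathlib

/-- Canonical embedding of `ℤⁿ` into `ℝⁿ`. -/
def coeR {n : ℕ} (α : Fin n → ℤ) : Fin n → ℝ := fun i => (α i : ℝ)

/-- Convex hull in `ℝⁿ` of a subset of `ℤⁿ`. -/
def convC {n : ℕ} (C : Set (Fin n → ℤ)) : Set (Fin n → ℝ) :=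
  convexHull ℝ (coeR '' C)

/-- The closure `cl(C) = ℤⁿ ∩ topological-closure(conv C)` of a subset of `ℤⁿ`. -/
def intCl {n : ℕ} (C : Set (Fin n → ℤ)) : Set (Fin n → ℤ) :=
  {α | coeR α ∈ closure (convC C)}

/-- `C` is pure: `kα ∈ C` with `k ≥ 1` implies `α ∈ C`. -/
def IsPure {n : ℕ} (C : Set (Fin n → ℤ)) : Prop :=
  ∀ (k : ℕ) (α : Fin n → ℤ), 1 ≤ k → k • α ∈ C → α ∈ C

/-- `C` is a submonoid of `(ℤⁿ, +)` (as a set). -/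
def IsSubmonoidSet {n : ℕ} (C : Set (Fin n → ℤ)) : Prop :=
  (0 : Fin n → ℤ) ∈ C ∧ ∀ a ∈ C, ∀ b ∈ C, a + b ∈ C

/-- `M` is a finitely generated monoid (as a subset of `ℤⁿ`). -/
def IsFGSet {n : ℕ} (M : Set (Fin n → ℤ)) : Prop :=
  ∃ F : Finset (Fin n → ℤ),
    (AddSubmonoid.closure (F : Set (Fin n → ℤ)) : Set (Fin n → ℤ)) = M

/-- `C` is almost prismal: for every real subspace `V ⊆ ℝⁿ`, `cl(C ∩ V)` is finitely generated. -/
def AlmostPrismal {n : ℕ} (C : Set (Fin n → ℤ)) : Prop :=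
  ∀ V : Submodule ℝ (Fin n → ℝ), IsFGSet (intCl {α ∈ C | coeR α ∈ V})

/-- `C` is prismal: pure and almost prismal. -/
def Prismal {n : ℕ} (C : Set (Fin n → ℤ)) : Prop := IsPure C ∧ AlmostPrismal C

namespace Aux

lemma coeR_injective {n : ℕ} : Function.Injective (coeR (n := n)) := by
  intro a b h
  funext i
  have := congrFun h i
  simp only [coeR] at this
  exact_mod_cast this

lemma coeR_zero {n : ℕ} : coeR (0 : Fin n → ℤ) = 0 := by funext i; simp [coeR]

lemma coeR_add {n : ℕ} (a b : Fin n → ℤ) : coeR (a + b) = coeR a + coeR b := by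
  funext i; simp [coeR]

lemma coeR_nsmul {n : ℕ} (k : ℕ) (α : Fin n → ℤ) : coeR (k • α) = (k : ℝ) • coeR α := by
  funext i; simp [coeR]

lemma coeR_sum {n : ℕ} {ι : Type*} (t : Finset ι) (f : ι → Fin n → ℤ) :
    coeR (∑ i ∈ t, f i) = ∑ i ∈ t, coeR (f i) := by
  funext j
  simp only [coeR, Finset.sum_apply]
  push_cast
  rfl

lemma nsmul_mem {n : ℕ} {C : Set (Fin n → ℤ)} (hC : IsSubmonoidSet C) {x : Fin n → ℤ}
    (hx : x ∈ C) (m : ℕ) : m • x ∈ C := by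
  induction m with
  | zero => simpa using hC.1
  | succ m ih =>
      have : (m + 1) • x = m • x + x := by rw [add_smul, one_smul]
      rw [this]
      exact hC.2 _ ih _ hx

lemma sum_mem {n : ℕ} {C : Set (Fin n → ℤ)} (hC : IsSubmonoidSet C) {ι : Type*}
    (t : Finset ι) (f : ι → Fin n → ℤ) (h : ∀ i ∈ t, f i ∈ C) : ∑ i ∈ t, f i ∈ C := by
  classical
  induction t using Finset.induction_on with
  | empty => simpa using hC.1
  | insert _ _ hx ih =>
      rw [Finset.sum_insert hx]
      exact hC.2 _ (h _ (Finset.mem_insert_self _ _)) _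
        (ih fun i hi => h i (Finset.mem_insert_of_mem hi))


/-- A rational vector in the real span of rational vectors is in their rational span. -/
lemma rat_span {n : ℕ} {ι : Type} (v : ι → (Fin n → ℚ)) (e : Fin n → ℚ)
    (h : (fun j => ((e j : ℝ))) ∈
      Submodule.span ℝ (Set.range fun i => (fun j => ((v i j : ℝ)) : Fin n → ℝ))) :
    e ∈ Submodule.span ℚ (Set.range v) := by
  by_contra hne
  obtain ⟨f, hfe, hfmap⟩ :=
    (Submodule.span ℚ (Set.range v)).exists_dual_map_eq_bot_of_notMem hne inferInstance
  -- real functional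
  set g : (Fin n → ℝ) →ₗ[ℝ] ℝ :=
    { toFun := fun x => ∑ j, (f (Pi.single j 1) : ℝ) * x j
      map_add' := by intro x y; simp [mul_add, Finset.sum_add_distrib]
      map_smul' := by intro c x; simp [Finset.mul_sum]; ring_nf; simp [mul_assoc, mul_comm, mul_left_comm] } with hg
  have key : ∀ u : Fin n → ℚ, g (fun j => (u j : ℝ)) = (f u : ℝ) := by
    intro u
    have hu : u = ∑ j, u j • (Pi.single j (1 : ℚ) : Fin n → ℚ) := by
      funext j
      simp [Finset.sum_apply, Pi.single_apply, Finset.sum_ite_eq']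
    calc g (fun j => (u j : ℝ)) = ∑ j, (f (Pi.single j 1) : ℝ) * (u j : ℝ) := rfl
      _ = ((∑ j, u j * f (Pi.single j 1) : ℚ) : ℝ) := by push_cast; rw [Finset.sum_congr rfl]; intro j _; ring
      _ = (f u : ℝ) := by
          rw [show (∑ j, u j * f (Pi.single j 1) : ℚ) = f u by
            conv_rhs => rw [hu]
            simp [map_sum, map_smul, smul_eq_mul]]
  have hker : Submodule.span ℝ (Set.range fun i => (fun j => ((v i j : ℝ)) : Fin n → ℝ)) ≤
      LinearMap.ker g := by
    rw [Submodule.span_le]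
    rintro x ⟨i, rfl⟩
    have hv : f (v i) = 0 := by
      have : f (v i) ∈ (Submodule.span ℚ (Set.range v)).map f :=
        ⟨v i, Submodule.subset_span ⟨i, rfl⟩, rfl⟩
      rw [hfmap] at this
      simpa using this
    have := key (v i)
    have h0 : g (fun j => ((v i j : ℝ))) = 0 := by rw [this, hv]; norm_num
    exact h0
  have : g (fun j => ((e j : ℝ))) = 0 := hker h
  rw [key e] at this
  exact_mod_cast hfe (by exact_mod_cast this)


lemma rat_approx {n : ℕ} (M : Set (Fin n → ℤ)) (p : Fin n → ℝ)
    (hp : p ∈ convexHull ℝ (coeR '' M)) {δ : ℝ} (hδ : 0 < δ) :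
    ∃ (ι : Type) (t : Finset ι) (β : ι → Fin n → ℤ) (q : ι → ℚ),
      (∀ i ∈ t, β i ∈ M) ∧ (∀ i, 0 ≤ q i) ∧
      ‖p - ∑ i ∈ t, (q i : ℝ) • coeR (β i)‖ < δ := by
  classical
  rw [convexHull_eq] at hp
  obtain ⟨ι, t, w, z, hw0, hw1, hz, hx⟩ := hp
  rw [Finset.centerMass_eq_of_sum_1 _ _ hw1] at hx
  set B : ℝ := (∑ i ∈ t, ‖z i‖) + 1 with hB
  have hBpos : 0 < B := by
    have : (0:ℝ) ≤ ∑ i ∈ t, ‖z i‖ := Finset.sum_nonneg fun i _ => norm_nonneg _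
    linarith
  set δ' : ℝ := δ / B with hδ'
  have hδ'pos : 0 < δ' := div_pos hδ hBpos
  -- choose integer preimages
  have hβex : ∀ i ∈ t, ∃ b : Fin n → ℤ, b ∈ M ∧ coeR b = z i := by
    intro i hi
    obtain ⟨b, hb, hbe⟩ := hz i hi
    exact ⟨b, hb, hbe⟩
  set β : ι → Fin n → ℤ := fun i => if h : i ∈ t then (hβex i h).choose else 0 with hβ
  have hβM : ∀ i ∈ t, β i ∈ M := by
    intro i hi; simp only [hβ, dif_pos hi]; exact (hβex i hi).choose_spec.1
  have hβz : ∀ i ∈ t, coeR (β i) = z i := by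
    intro i hi; simp only [hβ, dif_pos hi]; exact (hβex i hi).choose_spec.2
  -- choose rational approximations
  have hqex : ∀ i : ι, ∃ q : ℚ, w i < (q:ℝ) ∧ (q:ℝ) < w i + δ' :=
    fun i => exists_rat_btwn (lt_add_of_pos_right (w i) hδ'pos)
  set q : ι → ℚ := fun i => if i ∈ t then (hqex i).choose else 0 with hq
  have hq0 : ∀ i, 0 ≤ q i := by
    intro i
    by_cases hi : i ∈ t
    · simp only [hq, if_pos hi]
      have h1 := (hqex i).choose_spec.1
      have := hw0 i hi
      exact_mod_cast le_of_lt (lt_of_le_of_lt this h1)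
    · simp [hq, hi]
  refine ⟨ι, t, β, q, hβM, hq0, ?_⟩
  have hsum : ∑ i ∈ t, (q i : ℝ) • coeR (β i) = ∑ i ∈ t, (q i : ℝ) • z i :=
    Finset.sum_congr rfl fun i hi => by rw [hβz i hi]
  rw [hsum, ← hx, ← Finset.sum_sub_distrib]
  have hterm : ∀ i ∈ t, ‖w i • z i - (q i : ℝ) • z i‖ ≤ δ' * ‖z i‖ := by
    intro i hi
    rw [← sub_smul, norm_smul]
    have h1 := (hqex i).choose_spec.1
    have h2 := (hqex i).choose_spec.2
    simp only [hq, if_pos hi]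
    have habs : |w i - ((hqex i).choose : ℝ)| ≤ δ' := by
      rw [abs_le]; constructor <;> [linarith; linarith]
    have : |w i - ((hqex i).choose : ℝ)| * ‖z i‖ ≤ δ' * ‖z i‖ :=
      mul_le_mul_of_nonneg_right habs (norm_nonneg _)
    simpa [Real.norm_eq_abs] using this
  calc ‖∑ i ∈ t, (w i • z i - (q i : ℝ) • z i)‖ ≤ ∑ i ∈ t, ‖w i • z i - (q i : ℝ) • z i‖ :=
        norm_sum_le _ _
    _ ≤ ∑ i ∈ t, δ' * ‖z i‖ := Finset.sum_le_sum hterm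
    _ = δ' * ∑ i ∈ t, ‖z i‖ := by rw [Finset.mul_sum]
    _ < δ' * B := by
        apply mul_lt_mul_of_pos_left _ hδ'pos
        rw [hB]; linarith
    _ = δ := by rw [hδ']; field_simp


lemma nat_mul_of_den_dvd {q : ℚ} (hq : 0 ≤ q) {N : ℕ} (hdvd : q.den ∣ N) :
    ∃ m : ℕ, (m : ℚ) = N * q := by
  obtain ⟨c, hc⟩ := hdvd
  refine ⟨c * q.num.toNat, ?_⟩
  have hnum : (0:ℤ) ≤ q.num := Rat.num_nonneg.mpr hq
  have htoNat : (q.num.toNat : ℤ) = q.num := Int.toNat_of_nonneg hnum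
  have hd : ((q.den : ℚ)) ≠ 0 := by exact_mod_cast q.den_ne_zero
  have hden : ((q.den : ℚ)) * q = (q.num : ℚ) := by
    have h := (div_eq_iff hd).mp (Rat.num_div_den q)
    rw [h]; ring
  have h2 : ((q.num.toNat : ℕ) : ℚ) = (q.num : ℚ) := by
    exact_mod_cast congrArg (fun z : ℤ => (z:ℚ)) htoNat
  calc ((c * q.num.toNat : ℕ) : ℚ) = (c:ℚ) * (q.num:ℚ) := by rw [Nat.cast_mul, h2]
    _ = (c:ℚ) * ((q.den:ℚ) * q) := by rw [hden]
    _ = (N:ℚ) * q := by rw [hc]; push_cast; ring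

lemma exists_common_den {ι : Type} (t : Finset ι) (q : ι → ℚ) (hq : ∀ i ∈ t, 0 ≤ q i) :
    ∃ N : ℕ, 0 < N ∧ ∀ i ∈ t, ∃ m : ℕ, (m : ℚ) = N * q i := by
  refine ⟨∏ i ∈ t, (q i).den, ?_, ?_⟩
  · exact Finset.prod_pos fun i _ => (q i).pos
  · intro i hi
    exact nat_mul_of_den_dvd (hq i hi) (Finset.dvd_prod_of_mem _ hi)


lemma key {n : ℕ} (C A : Set (Fin n → ℤ)) (hC : IsSubmonoidSet C) (hpC : IsPure C)
    (hAC : A ⊆ C) {ι : Type} [Fintype ι] (σ : ι → (Fin n → ℤ)) (hσC : ∀ i, σ i ∈ C)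
    (hind : LinearIndependent ℝ (fun i => coeR (σ i)))
    (hAspan : coeR '' A ⊆ (Submodule.span ℝ (Set.range fun i => coeR (σ i)) : Set (Fin n → ℝ)))
    (α : Fin n → ℤ) (k : ℕ) (hk : 1 ≤ k)
    (ha : coeR α ∈ closure (convexHull ℝ (coeR '' A))) :
    k • α + ∑ i, σ i ∈ C := by
  classical
  set Wb : Submodule ℝ (Fin n → ℝ) := Submodule.span ℝ (Set.range fun i => coeR (σ i)) with hWb
  set T : (ι → ℝ) →ₗ[ℝ] (Fin n → ℝ) :=
    Fintype.linearCombination ℝ (fun i => coeR (σ i)) with hT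
  have hTapp : ∀ f : ι → ℝ, T f = ∑ i, f i • coeR (σ i) := fun f => rfl
  have hTinj : Function.Injective T := by
    intro x y hxy
    have h0 : T (x - y) = 0 := by rw [map_sub, hxy, sub_self]
    have h1 := Fintype.linearIndependent_iff.mp hind (x - y) (by rw [← hTapp]; exact h0)
    funext i
    have h2 : x i - y i = 0 := by simpa using h1 i
    linarith
  set E := (LinearEquiv.ofInjective T hTinj).symm with hE
  set Ec : (LinearMap.range T) →L[ℝ] (ι → ℝ) :=
    LinearMap.toContinuousLinearMap E.toLinearMap with hEc
  have hkR : (0:ℝ) < (k:ℝ) := by exact_mod_cast hk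
  set K : ℝ := ‖Ec‖ + 1 with hK
  have hEcnn : 0 ≤ ‖Ec‖ := ContinuousLinearMap.opNorm_nonneg Ec
  have hKpos : 0 < K := by positivity
  set δ : ℝ := 1 / ((k : ℝ) * K) with hδ
  have hδpos : 0 < δ := by positivity
  -- approximate coeR α by a rational nonnegative combination
  obtain ⟨p, hpconv, hpdist⟩ := Metric.mem_closure_iff.mp ha (δ/2) (by positivity)
  obtain ⟨ι₀, t, β, q, hβA, hq0, happrox⟩ := rat_approx A p hpconv (half_pos hδpos)
  set creal : Fin n → ℝ := ∑ i ∈ t, (q i : ℝ) • coeR (β i) with hcreal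
  have hac : ‖coeR α - creal‖ < δ := by
    have h1 : ‖coeR α - p‖ < δ/2 := by rw [← dist_eq_norm]; exact hpdist
    calc ‖coeR α - creal‖ = ‖(coeR α - p) + (p - creal)‖ := by ring_nf
      _ ≤ ‖coeR α - p‖ + ‖p - creal‖ := norm_add_le _ _
      _ < δ/2 + δ/2 := add_lt_add h1 happrox
      _ = δ := by ring
  set e : Fin n → ℝ := coeR (k • α) - (k:ℝ) • creal with he
  have he_norm : ‖e‖ < 1 / K := by
    have : e = (k:ℝ) • (coeR α - creal) := by
      rw [he, coeR_nsmul, smul_sub]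
    rw [this, norm_smul, Real.norm_natCast]
    calc (k:ℝ) * ‖coeR α - creal‖ < (k:ℝ) * δ := by
          exact mul_lt_mul_of_pos_left hac hkR
      _ = 1 / K := by rw [hδ]; field_simp
  -- e lies in the span of the σ's
  have hβW : ∀ i ∈ t, coeR (β i) ∈ Wb := fun i hi => hAspan ⟨β i, hβA i hi, rfl⟩
  have hcW : creal ∈ Wb := Submodule.sum_mem _ fun i hi => Submodule.smul_mem _ _ (hβW i hi)
  have haW : coeR α ∈ Wb := by
    have hconvsub : convexHull ℝ (coeR '' A) ⊆ (Wb : Set (Fin n → ℝ)) :=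
      convexHull_min hAspan Wb.convex
    have hclosed : IsClosed (Wb : Set (Fin n → ℝ)) := Wb.closed_of_finiteDimensional
    exact hclosed.closure_subset_iff.mpr hconvsub ha
  have heW : e ∈ Wb := by
    rw [he, coeR_nsmul]
    exact Submodule.sub_mem _ (Submodule.smul_mem _ _ haW) (Submodule.smul_mem _ _ hcW)
  -- rational coordinates
  set σq : ι → (Fin n → ℚ) := fun i j => ((σ i j : ℚ)) with hσq
  set eq : Fin n → ℚ :=
    (fun j => (k:ℚ) * (α j : ℚ) - ∑ i ∈ t, ((k:ℚ) * q i) * ((β i j : ℚ))) with heq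
  have hcast : (fun j => ((eq j : ℝ))) = e := by
    funext j
    rw [he]
    simp only [heq, hcreal, Pi.sub_apply, Pi.smul_apply, Finset.sum_apply, coeR, Pi.smul_apply,
      smul_eq_mul]
    push_cast
    rw [Finset.mul_sum]
    congr 1
    · simp
    · exact Finset.sum_congr rfl fun i hi => by ring
  have hident : (fun i => (fun j => ((σq i j : ℝ))) : ι → (Fin n → ℝ)) =
      fun i => coeR (σ i) := by
    funext i j; simp [hσq, coeR]
  have heqspan : eq ∈ Submodule.span ℚ (Set.range σq) := by
    apply rat_span
    rw [show (Set.range fun i => (fun j => ((σq i j : ℝ)) : Fin n → ℝ)) =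
        (Set.range fun i => coeR (σ i)) by rw [hident]]
    rw [hcast]
    exact heW
  obtain ⟨μ, hμ⟩ := (Submodule.mem_span_range_iff_exists_fun ℚ).mp heqspan
  -- real version of the coordinate identity
  have hμe : ∑ i, (μ i : ℝ) • coeR (σ i) = e := by
    rw [← hcast]
    funext j
    have h1 := congrFun hμ j
    simp only [Finset.sum_apply, Pi.smul_apply, smul_eq_mul] at h1
    simp only [Finset.sum_apply, Pi.smul_apply, smul_eq_mul, coeR]
    rw [← h1]
    push_cast
    exact Finset.sum_congr rfl fun i _ => by simp [hσq]
  -- bound on the coordinates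
  set x : ι → ℝ := fun i => (μ i : ℝ) with hx
  have hTx : T x = e := by rw [hTapp]; exact hμe
  have hxe : x = E ⟨e, ⟨x, hTx⟩⟩ := by
    have h1 : (LinearEquiv.ofInjective T hTinj) x = ⟨e, ⟨x, hTx⟩⟩ :=
      Subtype.ext (by rw [LinearEquiv.ofInjective_apply]; exact hTx)
    rw [← h1, hE, LinearEquiv.symm_apply_apply]
  have hxe' : Ec ⟨e, ⟨x, hTx⟩⟩ = x := by
    have h0 : Ec ⟨e, ⟨x, hTx⟩⟩ = E ⟨e, ⟨x, hTx⟩⟩ :=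
      congrFun (LinearMap.coe_toContinuousLinearMap' (E.toLinearMap)) _
    rw [h0]
    exact hxe.symm
  have hxnorm : ‖x‖ < 1 := by
    have h4 := Ec.le_opNorm ⟨e, ⟨x, hTx⟩⟩
    rw [hxe'] at h4
    have h5 : ‖(⟨e, ⟨x, hTx⟩⟩ : LinearMap.range T)‖ = ‖e‖ := rfl
    rw [h5] at h4
    calc ‖x‖ ≤ ‖Ec‖ * ‖e‖ := h4
      _ ≤ ‖Ec‖ * (1/K) := mul_le_mul_of_nonneg_left (le_of_lt he_norm) hEcnn
      _ = ‖Ec‖ / K := by rw [mul_one_div]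
      _ < 1 := by
          rw [div_lt_one hKpos, hK]
          linarith
  have hμbound : ∀ i, -1 < μ i ∧ (0:ℚ) < 1 + μ i := by
    intro i
    have h1 : |(μ i : ℝ)| < 1 := by
      have := norm_le_pi_norm x i
      rw [hx] at this
      simp only [Real.norm_eq_abs] at this ⊢
      exact lt_of_le_of_lt this hxnorm
    have h2 : -1 < (μ i : ℝ) := by
      rw [abs_lt] at h1; exact h1.1
    have h3 : (-1:ℚ) < μ i := by exact_mod_cast h2
    exact ⟨h3, by linarith⟩
  -- clear denominators
  obtain ⟨N₁, hN₁, hm₁⟩ := exists_common_den t (fun i => (k:ℚ) * q i)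
    (fun i _ => mul_nonneg (by positivity) (hq0 i))
  obtain ⟨N₂, hN₂, hm₂⟩ := exists_common_den (Finset.univ : Finset ι) (fun i => 1 + μ i)
    (fun i _ => le_of_lt (hμbound i).2)
  set N : ℕ := N₁ * N₂ with hN
  have hNpos : 0 < N := Nat.mul_pos hN₁ hN₂
  have hm₁' : ∀ i : {y // y ∈ t}, ∃ m : ℕ, (m:ℚ) = (N:ℚ) * ((k:ℚ) * q i.1) := by
    intro i
    obtain ⟨m, hm⟩ := hm₁ i.1 i.2
    exact ⟨N₂ * m, by push_cast [hm, hN]; ring⟩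
  have hm₂' : ∀ i : ι, ∃ m : ℕ, (m:ℚ) = (N:ℚ) * (1 + μ i) := by
    intro i
    obtain ⟨m, hm⟩ := hm₂ i (Finset.mem_univ i)
    exact ⟨N₁ * m, by push_cast [hm, hN]; ring⟩
  choose m₁ hm₁f using hm₁'
  choose m₂ hm₂f using hm₂'
  -- the integral witness
  set G : Fin n → ℤ := (∑ i ∈ t.attach, m₁ i • β i.1) + ∑ i, m₂ i • σ i with hG
  have hGC : G ∈ C := by
    apply hC.2
    · exact sum_mem hC _ _ fun i _ => nsmul_mem hC (hAC (hβA i.1 i.2)) _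
    · exact sum_mem hC _ _ fun i _ => nsmul_mem hC (hσC i) _
  -- the real identity
  have hcoeRG : coeR G = (N:ℝ) • coeR (k • α + ∑ i, σ i) := by
    rw [hG, coeR_add, coeR_sum, coeR_sum]
    have hterm1 : ∀ i : {y // y ∈ t}, coeR (m₁ i • β i.1) =
        ((N:ℝ) * ((k:ℝ) * (q i.1 : ℝ))) • coeR (β i.1) := by
      intro i
      rw [coeR_nsmul]
      congr 1
      have := hm₁f i
      have h2 : ((m₁ i : ℚ) : ℝ) = (((N:ℚ) * ((k:ℚ) * q i.1) : ℚ) : ℝ) := by rw [this]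
      push_cast at h2 ⊢
      exact h2
    have hterm2 : ∀ i : ι, coeR (m₂ i • σ i) = ((N:ℝ) * (1 + (μ i : ℝ))) • coeR (σ i) := by
      intro i
      rw [coeR_nsmul]
      congr 1
      have := hm₂f i
      have h2 : ((m₂ i : ℚ) : ℝ) = (((N:ℚ) * (1 + μ i) : ℚ) : ℝ) := by rw [this]
      push_cast at h2 ⊢
      exact h2
    rw [Finset.sum_congr rfl fun i _ => hterm1 i, Finset.sum_congr rfl fun i _ => hterm2 i]
    have hs1 : ∑ i ∈ t.attach, ((N:ℝ) * ((k:ℝ) * (q i.1 : ℝ))) • coeR (β i.1) =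
        (N:ℝ) • ((k:ℝ) • creal) := by
      rw [hcreal, Finset.smul_sum, Finset.smul_sum]
      rw [← Finset.sum_attach t (fun i => (N:ℝ) • ((k:ℝ) • ((q i : ℝ) • coeR (β i))))]
      exact Finset.sum_congr rfl fun i _ => by rw [smul_smul, smul_smul, mul_assoc]
    have hs2 : ∑ i : ι, ((N:ℝ) * (1 + (μ i : ℝ))) • coeR (σ i) =
        (N:ℝ) • (e + ∑ i, coeR (σ i)) := by
      rw [smul_add, ← hμe, Finset.smul_sum, Finset.smul_sum, ← Finset.sum_add_distrib]
      refine Finset.sum_congr rfl fun i _ => ?_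
      module
    rw [hs1, hs2, ← smul_add]
    rw [coeR_add, coeR_sum]
    congr 1
    rw [he]
    abel
  have hGeq : N • (k • α + ∑ i, σ i) = G := by
    apply coeR_injective
    rw [coeR_nsmul, hcoeRG]
  exact hpC N _ hNpos (by rw [hGeq]; exact hGC)

end Aux

open Aux in
private theorem closure_inter_eq' {n : ℕ} (C D : Set (Fin n → ℤ))
    (hC : IsSubmonoidSet C) (hD : IsSubmonoidSet D)
    (hpC : IsPure C) (hpD : IsPure D)
    (V : Submodule ℝ (Fin n → ℝ))
    (W : Submodule ℝ (Fin n → ℝ))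
    (hW : W = Submodule.span ℝ (coeR '' {α ∈ C ∩ D | coeR α ∈ V})) :
    {α | coeR α ∈ closure (convexHull ℝ (coeR '' {α ∈ C ∩ D | coeR α ∈ V}))} =
      {α | coeR α ∈ closure (convexHull ℝ (coeR '' {α ∈ C | coeR α ∈ W}))} ∩
      {α | coeR α ∈ closure (convexHull ℝ (coeR '' {α ∈ D | coeR α ∈ W}))} := by
  classical
  set S : Set (Fin n → ℤ) := {α ∈ C ∩ D | coeR α ∈ V} with hS
  set CW : Set (Fin n → ℤ) := {α ∈ C | coeR α ∈ W} with hCW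
  set DW : Set (Fin n → ℤ) := {α ∈ D | coeR α ∈ W} with hDW
  have hScoeW : coeR '' S ⊆ (W : Set (Fin n → ℝ)) := by
    rw [hW]; exact Submodule.subset_span
  have hSCW : S ⊆ CW := fun x hx => ⟨hx.1.1, hScoeW ⟨x, hx, rfl⟩⟩
  have hSDW : S ⊆ DW := fun x hx => ⟨hx.1.2, hScoeW ⟨x, hx, rfl⟩⟩
  have hCWsub : coeR '' CW ⊆ (W : Set (Fin n → ℝ)) := by
    rintro _ ⟨x, hx, rfl⟩; exact hx.2
  have hDWsub : coeR '' DW ⊆ (W : Set (Fin n → ℝ)) := by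
    rintro _ ⟨x, hx, rfl⟩; exact hx.2
  have hWV : W ≤ V := by
    rw [hW]
    apply Submodule.span_le.mpr
    rintro _ ⟨x, hx, rfl⟩
    exact hx.2
  have hSmon : IsSubmonoidSet S := by
    constructor
    · exact ⟨⟨hC.1, hD.1⟩, by rw [coeR_zero]; exact V.zero_mem⟩
    · rintro a ⟨⟨haC, haD⟩, haV⟩ b ⟨⟨hbC, hbD⟩, hbV⟩
      exact ⟨⟨hC.2 a haC b hbC, hD.2 a haD b hbD⟩, by rw [coeR_add]; exact V.add_mem haV hbV⟩
  apply Set.eq_of_subset_of_subset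
  · intro α hα
    exact ⟨closure_mono (convexHull_mono (Set.image_mono hSCW)) hα,
           closure_mono (convexHull_mono (Set.image_mono hSDW)) hα⟩
  · rintro α ⟨h₁, h₂⟩
    -- choose a finite linearly independent spanning family inside coeR '' S
    obtain ⟨b, hbsub, hbspan, hbind⟩ := exists_linearIndependent ℝ (coeR '' S)
    have hbfin : b.Finite := hbind.setFinite
    haveI : Fintype ↥b := hbfin.fintype
    have hchoice : ∀ x : ↥b, ∃ a : Fin n → ℤ, a ∈ S ∧ coeR a = ↑x := fun x => hbsub x.2
    choose σ hσS hσcoe using hchoice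
    have hident : (fun i : ↥b => coeR (σ i)) = fun i : ↥b => (i : Fin n → ℝ) :=
      funext fun i => hσcoe i
    have hind : LinearIndependent ℝ (fun i : ↥b => coeR (σ i)) := by
      rw [hident]; exact hbind
    have hspanb : Submodule.span ℝ (Set.range fun i : ↥b => coeR (σ i)) = W := by
      rw [hident, Subtype.range_coe, hbspan, ← hW]
    -- membership of the shifted points in S
    have hαW : coeR α ∈ W := by
      have hconvsub : convexHull ℝ (coeR '' CW) ⊆ (W : Set (Fin n → ℝ)) :=
        convexHull_min hCWsub W.convex
      have hclosed : IsClosed (W : Set (Fin n → ℝ)) := W.closed_of_finiteDimensional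
      exact hclosed.closure_subset_iff.mpr hconvsub h₁
    have hσW : ∀ i : ↥b, coeR (σ i) ∈ W := fun i => by
      rw [hW]; exact Submodule.subset_span ⟨σ i, hσS i, rfl⟩
    have hkey : ∀ k : ℕ, 1 ≤ k → k • α + ∑ i, σ i ∈ S := by
      intro k hk
      have hCmem : k • α + ∑ i, σ i ∈ C := by
        apply key C CW hC hpC (fun x hx => hx.1) σ (fun i => (hσS i).1.1) hind _ α k hk h₁
        rw [hspanb]; exact hCWsub
      have hDmem : k • α + ∑ i, σ i ∈ D := by
        apply key D DW hD hpD (fun x hx => hx.1) σ (fun i => (hσS i).1.2) hind _ α k hk h₂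
        rw [hspanb]; exact hDWsub
      refine ⟨⟨hCmem, hDmem⟩, ?_⟩
      have hWmem : coeR (k • α + ∑ i, σ i) ∈ W := by
        rw [coeR_add, coeR_nsmul]
        exact W.add_mem (W.smul_mem _ hαW)
          (by rw [coeR_sum]; exact Submodule.sum_mem _ fun i _ => hσW i)
      exact hWV hWmem
    -- conclude by a limiting argument
    set sstar : Fin n → ℝ := coeR (∑ i, σ i) with hsstar
    have hmem : ∀ k : ℕ, 1 ≤ k →
        coeR α + ((k:ℝ))⁻¹ • sstar ∈ convexHull ℝ (coeR '' S) := by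
      intro k hk
      have hkR : (0:ℝ) < (k:ℝ) := by exact_mod_cast hk
      have hp : coeR (k • α + ∑ i, σ i) ∈ convexHull ℝ (coeR '' S) :=
        subset_convexHull ℝ _ ⟨_, hkey k hk, rfl⟩
      have h0 : (0 : Fin n → ℝ) ∈ convexHull ℝ (coeR '' S) :=
        subset_convexHull ℝ _ ⟨0, hSmon.1, coeR_zero⟩
      have h1 : ((k:ℝ))⁻¹ ≤ 1 := by
        have hk1 : (1:ℝ) ≤ (k:ℝ) := by exact_mod_cast hk
        have := inv_anti₀ one_pos hk1
        simpa using this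
      have hcombo := (convex_convexHull ℝ (coeR '' S)) hp h0
        (a := ((k:ℝ))⁻¹) (b := 1 - ((k:ℝ))⁻¹)
        (le_of_lt (inv_pos.mpr hkR)) (by linarith) (by ring)
      have heqc : ((k:ℝ))⁻¹ • coeR (k • α + ∑ i, σ i) + (1 - ((k:ℝ))⁻¹) • (0 : Fin n → ℝ) =
          coeR α + ((k:ℝ))⁻¹ • sstar := by
        rw [smul_zero, add_zero, coeR_add, coeR_nsmul, smul_add, smul_smul,
          inv_mul_cancel₀ (ne_of_gt hkR), one_smul, hsstar]
      rw [← heqc]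
      exact hcombo
    have htend : Filter.Tendsto (fun k : ℕ => coeR α + ((k:ℝ))⁻¹ • sstar)
        Filter.atTop (nhds (coeR α)) := by
      have h1 : Filter.Tendsto (fun k : ℕ => ((k:ℝ))⁻¹) Filter.atTop (nhds 0) :=
        tendsto_inv_atTop_nhds_zero_nat
      have h2 : Filter.Tendsto (fun k : ℕ => ((k:ℝ))⁻¹ • sstar) Filter.atTop
          (nhds ((0:ℝ) • sstar)) := h1.smul_const sstar
      rw [zero_smul] at h2
      simpa using h2.const_add (coeR α)
    exact mem_closure_of_tendsto htend
      (Filter.eventually_atTop.mpr ⟨1, fun k hk => hmem k hk⟩)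



/-- For pure submonoids `C, D ⊆ ℤⁿ` and a subspace `V ⊆ ℝⁿ`, with
`W = span(C ∩ D ∩ V)`: `cl((C ∩ D) ∩ V) = cl(C ∩ W) ∩ cl(D ∩ W)`. -/
theorem closure_inter_eq {n : ℕ} (C D : Set (Fin n → ℤ))
    (hC : IsSubmonoidSet C) (hD : IsSubmonoidSet D)
    (hpC : IsPure C) (hpD : IsPure D)
    (V : Submodule ℝ (Fin n → ℝ))
    (W : Submodule ℝ (Fin n → ℝ))
    (hW : W = Submodule.span ℝ (coeR '' {α ∈ C ∩ D | coeR α ∈ V})) :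
    intCl {α ∈ C ∩ D | coeR α ∈ V} =
      intCl {α ∈ C | coeR α ∈ W} ∩ intCl {α ∈ D | coeR α ∈ W} := by
  simp only [intCl, convC]
  exact closure_inter_eq' C D hC hD hpC hpD V W hW
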